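/- Let N be a closed subspace of a complex Hilbert space E and let (M_i)_{i ∈ I} be a family of closed subspaces of E such that P_{M_i} commutes with P_N for every i ∈ I. Then the orthogonal projection onto the topological closure of ⨆_{i} M_i commutes with P_N, and the orthogonal projection onto ⨅_{i} M_i commutes with P_N. -/

import Mathlib

variable {E : Type*} [NormedAddCommGroup E] [InnerProductSpace ℂ E] [CompleteSpace E]

/-- Orthogonal projection onto (the topological closure of) a submodule, as a
continuous linear operator on `E`. For a closed subspace `K` this is the
orthogonal projection `P_K` onto `K` itself. -/
noncomputable def proj (K : Submodule ℂ E) : E →L[ℂ] E :=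
  K.topologicalClosure.subtypeL.comp (Submodule.orthogonalProjectionOnto K.topologicalClosure)

lemma proj_isSelfAdjoint (K : Submodule ℂ E) : IsSelfAdjoint (proj K) := by
  haveI : CompleteSpace K.topologicalClosure :=
    K.isClosed_topologicalClosure.completeSpace_coe
  exact isSelfAdjoint_starProjection K.topologicalClosure

lemma proj_mem (K : Submodule ℂ E) (x : E) : proj K x ∈ K.topologicalClosure := by
  simp [proj]

lemma proj_eq_self (K : Submodule ℂ E) {x : E} (hx : x ∈ K.topologicalClosure) :
    proj K x = x := by
  haveI : CompleteSpace K.topologicalClosure :=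
    K.isClosed_topologicalClosure.completeSpace_coe
  exact (Submodule.starProjection_eq_self_iff (K := K.topologicalClosure)).2 hx

lemma closed_closure_eq {K : Submodule ℂ E} (hK : IsClosed (K : Set E)) :
    K.topologicalClosure = K :=
  le_antisymm (K.topologicalClosure_minimal le_rfl hK) K.le_topologicalClosure

lemma comm_of_invariant {K N : Submodule ℂ E}
    (h : ∀ x ∈ K.topologicalClosure, proj N x ∈ K.topologicalClosure) :
    proj K ∘L proj N = proj N ∘L proj K := by
  have h1 : proj K ∘L proj N ∘L proj K = proj N ∘L proj K := by
    ext x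
    exact proj_eq_self K (h _ (proj_mem K x))
  have h2 : proj K ∘L proj N ∘L proj K = proj K ∘L proj N := by
    have := congrArg ContinuousLinearMap.adjoint h1
    simp only [ContinuousLinearMap.adjoint_comp, (proj_isSelfAdjoint K).adjoint_eq,
      (proj_isSelfAdjoint N).adjoint_eq] at this
    rw [← ContinuousLinearMap.comp_assoc]
    exact this
  rw [← h2, h1]

lemma invariant_of_comm {K N : Submodule ℂ E}
    (h : proj K ∘L proj N = proj N ∘L proj K) (x : E)
    (hx : x ∈ K.topologicalClosure) : proj N x ∈ K.topologicalClosure := by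
  have : proj K (proj N x) = proj N (proj K x) := congrFun (congrArg DFunLike.coe h) x
  rw [proj_eq_self K hx] at this
  rw [← this]
  exact proj_mem K _

theorem stmt11 {ι : Type*} (N : Submodule ℂ E) (M : ι → Submodule ℂ E)
    (hN : IsClosed (N : Set E)) (hM : ∀ i, IsClosed ((M i : Set E)))
    (hcomm : ∀ i, proj (M i) ∘L proj N = proj N ∘L proj (M i)) :
    proj (⨆ i, M i).topologicalClosure ∘L proj N
        = proj N ∘L proj (⨆ i, M i).topologicalClosure ∧
      proj (⨅ i, M i) ∘L proj N = proj N ∘L proj (⨅ i, M i) := by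
  have hinv : ∀ i, ∀ x ∈ M i, proj N x ∈ M i := by
    intro i x hx
    have := invariant_of_comm (hcomm i) x (by rw [closed_closure_eq (hM i)]; exact hx)
    rwa [closed_closure_eq (hM i)] at this
  constructor
  · apply comm_of_invariant
    have hc : ((⨆ i, M i).topologicalClosure).topologicalClosure
        = (⨆ i, M i).topologicalClosure :=
      closed_closure_eq (⨆ i, M i).isClosed_topologicalClosure
    rw [hc]
    -- first: sup invariant
    have hsup : ∀ x ∈ (⨆ i, M i), proj N x ∈ (⨆ i, M i) := by
      intro x hx
      refine Submodule.iSup_induction (motive := fun x => proj N x ∈ ⨆ i, M i) M hx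
        (fun i y hy => Submodule.mem_iSup_of_mem i (hinv i y hy)) (by simp)
        (fun y z hy hz => by rw [map_add]; exact Submodule.add_mem _ hy hz)
    intro x hx
    have : (⨆ i, M i).topologicalClosure ≤
        ((⨆ i, M i).topologicalClosure).comap (proj N : E →ₗ[ℂ] E) := by
      apply Submodule.topologicalClosure_minimal
      · intro y hy
        exact (⨆ i, M i).le_topologicalClosure (hsup y hy)
      · exact (⨆ i, M i).isClosed_topologicalClosure.preimage (proj N).continuous
    exact this hx
  · apply comm_of_invariant
    have hic : IsClosed ((⨅ i, M i : Submodule ℂ E) : Set E) := by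
      rw [Submodule.coe_iInf]; exact isClosed_iInter hM
    rw [closed_closure_eq hic]
    intro x hx
    rw [Submodule.mem_iInf] at hx ⊢
    exact fun i => hinv i x (hx i)
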